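/- Let X and Y be independent positive random variables on a probability space, let p > δ > 0, and let L : (0,∞) → (0,∞) be slowly varying at ∞. If E[X^{p+δ}] < ∞ and P(Y > y) ~ y^{−p} L(y) as y → ∞ (i.e. lim_{y→∞} P(Y > y)/(y^{−p}L(y)) = 1), then P(XY > y) ~ E[X^p] · y^{−p} L(y) as y → ∞. (Lemma A.1 of the paper.) -/

import Mathlib

open MeasureTheory Filter Set ProbabilityTheory
open scoped ENNReal Topology ProbabilityTheory

/-- `L` is slowly varying at `∞`. -/
def SlowlyVarying (L : ℝ → ℝ) : Prop :=
  ∀ c : ℝ, 0 < c → Tendsto (fun x : ℝ => L (c * x) / L x) atTop (𝓝 1)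



private lemma brei_chain_upper (g : ℝ → ℝ) (t1 ρ : ℝ) (ht1 : 1 ≤ t1) (hρ : 1 ≤ ρ)
    (hstep : ∀ s, t1 ≤ s → g s ≤ ρ * g (2 * s)) :
    ∀ (k : ℕ) (y : ℝ), t1 ≤ y / 2 ^ k → g (y / 2 ^ k) ≤ ρ ^ k * g y := by
  intro k
  induction k with
  | zero => intro y hy; simp
  | succ k ih =>
    intro y hy
    have h2 : (2 : ℝ) * (y / 2 ^ (k + 1)) = y / 2 ^ k := by ring
    have hy' : t1 ≤ y / 2 ^ k := by rw [← h2]; nlinarith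
    have hρk : (1:ℝ) ≤ ρ ^ k := one_le_pow₀ hρ
    calc g (y / 2 ^ (k + 1)) ≤ ρ * g (2 * (y / 2 ^ (k + 1))) := hstep _ hy
      _ = ρ * g (y / 2 ^ k) := by rw [h2]
      _ ≤ ρ * (ρ ^ k * g y) := by nlinarith [ih y hy']
      _ = ρ ^ (k + 1) * g y := by ring

private lemma brei_chain_lower (g : ℝ → ℝ) (t1 ρ : ℝ) (ht1 : 1 ≤ t1) (hρ : 0 < ρ)
    (hstep : ∀ s, t1 ≤ s → ρ * g s ≤ g (2 * s)) :
    ∀ n : ℕ, ρ ^ n * g t1 ≤ g (t1 * 2 ^ n) := by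
  intro n
  induction n with
  | zero => simp
  | succ n ih =>
    have h2n : (1:ℝ) ≤ 2 ^ n := one_le_pow₀ (by norm_num)
    have ht : t1 ≤ t1 * 2 ^ n := by nlinarith
    have h2 : t1 * 2 ^ (n + 1) = 2 * (t1 * 2 ^ n) := by ring
    calc ρ ^ (n + 1) * g t1 = ρ * (ρ ^ n * g t1) := by ring
      _ ≤ ρ * g (t1 * 2 ^ n) := by nlinarith
      _ ≤ g (2 * (t1 * 2 ^ n)) := hstep _ ht
      _ = g (t1 * 2 ^ (n + 1)) := by rw [h2]

/-- growth: if `g` is antitone, positive at `t1`, and `g(2s) ≥ ρ g(s)` beyond `t1` with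
`2^q * ρ > 1`, then `y^q g(y) → ∞`. -/
private lemma brei_flim (g : ℝ → ℝ) (hant : Antitone g) (q t1 ρ : ℝ)
    (ht1 : 1 ≤ t1) (hq : 0 ≤ q) (hρ : 0 < ρ) (hr : 1 < (2:ℝ) ^ q * ρ)
    (hgpos : 0 < g t1)
    (hstep : ∀ s, t1 ≤ s → ρ * g s ≤ g (2 * s)) :
    Tendsto (fun y : ℝ => y ^ q * g y) atTop atTop := by
  set r : ℝ := (2:ℝ) ^ q * ρ with hrdef
  set C : ℝ := t1 ^ q * (ρ * g t1) with hCdef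
  have ht1pos : (0:ℝ) < t1 := lt_of_lt_of_le one_pos ht1
  have hCpos : 0 < C := by
    have := Real.rpow_pos_of_pos ht1pos q
    positivity
  rw [tendsto_atTop]
  intro b
  obtain ⟨N, hN⟩ := pow_unbounded_of_one_lt (b / C) hr
  have hbN : b ≤ C * r ^ N := by
    rw [div_lt_iff₀ hCpos] at hN
    nlinarith
  filter_upwards [eventually_ge_atTop (t1 * 2 ^ N)] with y hy
  have h2N : (1:ℝ) ≤ 2 ^ N := one_le_pow₀ (by norm_num)
  have hyt1 : t1 ≤ y := le_trans (by nlinarith) hy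
  have hx1 : 1 ≤ y / t1 := (one_le_div ht1pos).2 hyt1
  obtain ⟨n, hn1, hn2⟩ := exists_nat_pow_near hx1 (by norm_num : (1:ℝ) < 2)
  -- N ≤ n
  have hNn : N ≤ n := by
    have : (2:ℝ) ^ N ≤ y / t1 := le_trans (by
      rw [le_div_iff₀ ht1pos]; linarith [hy]) (le_refl _)
    have h1 : (2:ℝ) ^ N < 2 ^ (n + 1) := lt_of_le_of_lt this hn2
    have := (pow_lt_pow_iff_right₀ (by norm_num : (1:ℝ) < 2)).1 h1
    omega
  have hylow : t1 * 2 ^ n ≤ y := by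
    have := (le_div_iff₀ ht1pos).1 hn1
    linarith
  have hyhigh : y ≤ t1 * 2 ^ (n + 1) := by
    have := le_of_lt hn2
    calc y = t1 * (y / t1) := by field_simp
      _ ≤ t1 * 2 ^ (n + 1) := by nlinarith
  have hchain := brei_chain_lower g t1 ρ ht1 hρ hstep (n + 1)
  have hgy : ρ ^ (n+1) * g t1 ≤ g y := le_trans hchain (hant hyhigh)
  have hgynn : 0 < ρ ^ (n+1) * g t1 := by positivity
  -- y^q ≥ (t1 * 2^n)^q
  have hbase : (0:ℝ) ≤ t1 * 2 ^ n := by positivity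
  have hyq : (t1 * 2 ^ n) ^ q ≤ y ^ q := Real.rpow_le_rpow hbase hylow hq
  have hkey : C * r ^ n ≤ y ^ q * g y := by
    have hexp : (t1 * 2 ^ n) ^ q = t1 ^ q * ((2:ℝ) ^ q) ^ n := by
      rw [Real.mul_rpow ht1pos.le (by positivity), ← Real.rpow_natCast (2:ℝ) n,
        ← Real.rpow_natCast ((2:ℝ) ^ q) n, ← Real.rpow_mul (by norm_num),
        ← Real.rpow_mul (by norm_num), mul_comm q (n:ℝ)]
    have h1 : C * r ^ n = (t1 ^ q * ((2:ℝ) ^ q) ^ n) * (ρ ^ (n+1) * g t1) := by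
      rw [hCdef, hrdef, mul_pow]; ring
    rw [h1, ← hexp]
    have h2q : (0:ℝ) < (t1 * 2 ^ n) ^ q := Real.rpow_pos_of_pos (by positivity) q
    calc (t1 * 2 ^ n) ^ q * (ρ ^ (n+1) * g t1) ≤ (t1 * 2 ^ n) ^ q * g y := by nlinarith
      _ ≤ y ^ q * g y := by nlinarith [le_trans hgynn.le hgy]
  have hrN : r ^ N ≤ r ^ n := pow_le_pow_right₀ (le_of_lt hr) hNn
  nlinarith

/-- domination: `g(y/x) ≤ ρ (1 + x^q) g(y)` for `0 < x`, `2 t1 ≤ y/x`,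
where `ρ = 2^q` and one-step bound holds beyond `t1`. -/
private lemma brei_dom (g : ℝ → ℝ) (hant : Antitone g) (hg0 : ∀ s, 0 ≤ g s)
    (q t1 : ℝ) (ht1 : 1 ≤ t1) (hq : 0 ≤ q)
    (hstep : ∀ s, t1 ≤ s → g s ≤ (2:ℝ) ^ q * g (2 * s)) :
    ∀ y x : ℝ, 0 < x → 2 * t1 ≤ y / x → g (y / x) ≤ (2:ℝ) ^ q * (1 + x ^ q) * g y := by
  intro y x hx hxy
  set ρ : ℝ := (2:ℝ) ^ q with hρdef
  have hρ1 : (1:ℝ) ≤ ρ := by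
    have := Real.rpow_le_rpow_of_exponent_le (by norm_num : (1:ℝ) ≤ 2) hq
    simpa [Real.rpow_zero] using (Real.rpow_zero 2 ▸ this : (2:ℝ) ^ (0:ℝ) ≤ 2 ^ q)
  have ht1pos : (0:ℝ) < t1 := lt_of_lt_of_le one_pos ht1
  have hypos : 0 < y := by
    have : 0 < y / x := lt_of_lt_of_le (by positivity) hxy
    exact (div_pos_iff.1 this).resolve_right (fun h => absurd hx (not_lt.2 h.2.le)) |>.1
  have hxq : (0:ℝ) ≤ x ^ q := (Real.rpow_pos_of_pos hx q).le
  rcases le_or_gt x 1 with hx1 | hx1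
  · -- small x : y/x ≥ y
    have : y ≤ y / x := by
      rw [le_div_iff₀ hx]; nlinarith
    have h1 : g (y / x) ≤ g y := hant this
    nlinarith [hg0 y, mul_nonneg (mul_nonneg (by linarith : (0:ℝ) ≤ ρ) hxq) (hg0 y),
      mul_nonneg (by linarith : (0:ℝ) ≤ ρ - 1) (hg0 y)]
  · -- x ≥ 1
    obtain ⟨n, hn1, hn2⟩ := exists_nat_pow_near hx1.le (by norm_num : (1:ℝ) < 2)
    have h2n1 : (0:ℝ) < 2 ^ (n+1) := by positivity
    have hylow : t1 ≤ y / 2 ^ (n + 1) := by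
      rw [le_div_iff₀ h2n1]
      have h1 : 2 * t1 * x ≤ y := (le_div_iff₀ hx).1 hxy
      have h2 : (2:ℝ) ^ (n + 1) = 2 * 2 ^ n := by ring
      nlinarith
    have hchain := brei_chain_upper g t1 ρ ht1 hρ1 (fun s hs => hstep s hs) (n+1) y hylow
    have hmono : g (y / x) ≤ g (y / 2 ^ (n + 1)) := by
      apply hant
      exact div_le_div_of_nonneg_left hypos.le hx hn2.le
    have hρn : ρ ^ n ≤ x ^ q := by
      calc ρ ^ n = ((2:ℝ) ^ n) ^ q := by
            rw [hρdef, ← Real.rpow_natCast (2:ℝ) n, ← Real.rpow_natCast ((2:ℝ)^q) n,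
              ← Real.rpow_mul (by norm_num), ← Real.rpow_mul (by norm_num), mul_comm]
        _ ≤ x ^ q := Real.rpow_le_rpow (by positivity) hn1 hq
    calc g (y / x) ≤ g (y / 2 ^ (n+1)) := hmono
      _ ≤ ρ ^ (n+1) * g y := hchain
      _ = ρ * ρ ^ n * g y := by ring
      _ ≤ ρ * x ^ q * g y := by
          nlinarith [mul_le_mul_of_nonneg_left (mul_le_mul_of_nonneg_right hρn (hg0 y))
            (le_trans zero_le_one hρ1)]
      _ ≤ ρ * (1 + x ^ q) * g y := by
          nlinarith [mul_nonneg (le_trans zero_le_one hρ1) (hg0 y)]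



/-- Lemma A.1 of the paper (a Breiman-type lemma): if `X, Y` are independent positive
random variables with `E[X^{p+δ}] < ∞` and `P(Y > y) ~ y^{−p} L(y)`, then
`P(XY > y) ~ E[X^p] y^{−p} L(y)` as `y → ∞`. -/
theorem stmt6 {Ω : Type*} [MeasureSpace Ω] [IsProbabilityMeasure (ℙ : Measure Ω)]
    (X Y : Ω → ℝ) (hXmeas : Measurable X) (hYmeas : Measurable Y)
    (hXpos : ∀ ω, 0 < X ω) (hYpos : ∀ ω, 0 < Y ω)
    (hindep : IndepFun X Y ℙ)
    (p δ : ℝ) (hδ : 0 < δ) (hδp : δ < p)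
    (L : ℝ → ℝ) (hLpos : ∀ x : ℝ, 0 < x → 0 < L x) (hLsv : SlowlyVarying L)
    (hmom : Integrable (fun ω => X ω ^ (p + δ)) ℙ)
    (htail : Tendsto (fun y : ℝ => (ℙ {ω | y < Y ω}).toReal / (y ^ (-p) * L y))
      atTop (𝓝 1)) :
    Tendsto (fun y : ℝ => (ℙ {ω | y < X ω * Y ω}).toReal / (y ^ (-p) * L y))
      atTop (𝓝 (∫ ω, X ω ^ p ∂ℙ)) := by
  have hp : 0 < p := hδ.trans hδp
  set μ : Measure ℝ := Measure.map X ℙ with hμdef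
  set ν : Measure ℝ := Measure.map Y ℙ with hνdef
  haveI hμprob : IsProbabilityMeasure μ := Measure.isProbabilityMeasure_map hXmeas.aemeasurable
  haveI hνprob : IsProbabilityMeasure ν := Measure.isProbabilityMeasure_map hYmeas.aemeasurable
  set G : ℝ → ℝ := fun t => (ν (Ioi t)).toReal with hGdef
  have hGanti : Antitone G := fun a b hab =>
    ENNReal.toReal_mono (measure_ne_top _ _) (measure_mono (Ioi_subset_Ioi hab))
  have hG0 : ∀ t, 0 ≤ G t := fun t => ENNReal.toReal_nonneg
  have hG1 : ∀ t, G t ≤ 1 := fun t => by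
    simpa using ENNReal.toReal_mono (by simp) (prob_le_one (μ := ν) (s := Ioi t))
  have hGmeas : Measurable G := hGanti.measurable
  -- tail in terms of G
  have htail' : Tendsto (fun y => G y / (y ^ (-p) * L y)) atTop (𝓝 1) := by
    apply htail.congr
    intro y
    congr 2
    rw [hνdef, Measure.map_apply hYmeas measurableSet_Ioi]
    rfl
  -- G is positive everywhere
  have hGpos : ∀ t, 0 < G t := by
    have hev : ∀ᶠ y in atTop, 0 < G y := by
      filter_upwards [htail'.eventually (eventually_gt_nhds (by norm_num : (1:ℝ)/2 < 1)),
        eventually_gt_atTop (0:ℝ)] with y h1 h2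
      by_contra h
      push_neg at h
      have hden : 0 < y ^ (-p) * L y := by
        have := Real.rpow_pos_of_pos h2 (-p)
        have := hLpos y h2
        positivity
      have : G y / (y ^ (-p) * L y) ≤ 0 := div_nonpos_of_nonpos_of_nonneg h hden.le
      linarith
    intro t
    obtain ⟨y, hy1, hy2⟩ := (hev.and (eventually_ge_atTop t)).exists
    exact lt_of_lt_of_le hy1 (hGanti hy2)
  -- ratio limit
  have hratio : ∀ c : ℝ, 0 < c →
      Tendsto (fun y => G (c * y) / G y) atTop (𝓝 (c ^ (-p))) := by
    intro c hc
    have hcy : Tendsto (fun y : ℝ => c * y) atTop atTop :=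
      Tendsto.const_mul_atTop hc tendsto_id
    have h1 : Tendsto (fun y => G (c * y) / ((c * y) ^ (-p) * L (c * y))) atTop (𝓝 1) :=
      htail'.comp hcy
    have h2 : Tendsto (fun y => (y ^ (-p) * L y) / G y) atTop (𝓝 1) := by
      have h := htail'.inv₀ one_ne_zero
      rw [inv_one] at h
      apply h.congr'
      filter_upwards [eventually_gt_atTop (0:ℝ)] with y hy
      rw [inv_div]
    have h3 : Tendsto (fun y => L (c * y) / L y) atTop (𝓝 1) := hLsv c hc
    have h4 : Tendsto (fun y => (G (c * y) / ((c * y) ^ (-p) * L (c * y))) *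
        (c ^ (-p) * (L (c * y) / L y)) * ((y ^ (-p) * L y) / G y)) atTop (𝓝 (c ^ (-p))) := by
      have := (h1.mul (h3.const_mul (c ^ (-p)))).mul h2
      simpa using this
    apply h4.congr'
    filter_upwards [eventually_gt_atTop (0:ℝ)] with y hy
    have hcy0 : 0 < c * y := by positivity
    have hGy := (hGpos y).ne'
    have hLy := (hLpos y hy).ne'
    have hLcy := (hLpos _ hcy0).ne'
    have hyp := (Real.rpow_pos_of_pos hy (-p)).ne'
    have hcp := (Real.rpow_pos_of_pos hc (-p)).ne'
    have hmul : (c * y) ^ (-p) = c ^ (-p) * y ^ (-p) := Real.mul_rpow hc.le hy.le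
    rw [hmul]
    field_simp
  -- one-step doubling bounds
  set ρd : ℝ := (2:ℝ) ^ (p + δ/2) with hρddef
  have hρdpos : 0 < ρd := Real.rpow_pos_of_pos two_pos _
  have hstep_ev : ∀ᶠ s in atTop, ρd⁻¹ * G s ≤ G (2 * s) ∧ G s ≤ ρd * G (2 * s) := by
    have hlt : (2:ℝ) ^ (-(p + δ/2)) < 2 ^ (-p) :=
      (Real.rpow_lt_rpow_left_iff (by norm_num : (1:ℝ) < 2)).2 (by linarith)
    filter_upwards [(hratio 2 two_pos).eventually (eventually_gt_nhds hlt)] with s hs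
    have hGs := hGpos s
    have hinv : ρd⁻¹ = (2:ℝ) ^ (-(p + δ/2)) := by
      rw [hρddef, ← Real.rpow_neg (by norm_num)]
    have h1 : ρd⁻¹ * G s ≤ G (2 * s) := by
      rw [hinv]
      exact le_of_lt ((lt_div_iff₀ hGs).1 hs)
    refine ⟨h1, ?_⟩
    have h2 : ρd * (ρd⁻¹ * G s) ≤ ρd * G (2 * s) :=
      mul_le_mul_of_nonneg_left h1 hρdpos.le
    rwa [← mul_assoc, mul_inv_cancel₀ hρdpos.ne', one_mul] at h2
  obtain ⟨t0, ht0⟩ := eventually_atTop.1 hstep_ev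
  set t1 : ℝ := max t0 1 with ht1def
  have ht1 : 1 ≤ t1 := le_max_right _ _
  have ht1pos : (0:ℝ) < t1 := lt_of_lt_of_le one_pos ht1
  have hstepl : ∀ s, t1 ≤ s → ρd⁻¹ * G s ≤ G (2 * s) :=
    fun s hs => (ht0 s (le_trans (le_max_left _ _) hs)).1
  have hstepu : ∀ s, t1 ≤ s → G s ≤ ρd * G (2 * s) :=
    fun s hs => (ht0 s (le_trans (le_max_left _ _) hs)).2
  -- growth of y^(p+δ) G y
  have hflim : Tendsto (fun y : ℝ => y ^ (p + δ) * G y) atTop atTop := by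
    apply brei_flim G hGanti (p + δ) t1 ρd⁻¹ ht1 (by linarith) (inv_pos.2 hρdpos) ?_
      (hGpos t1) hstepl
    have hcomb : (2:ℝ) ^ (p + δ) * ρd⁻¹ = 2 ^ (δ/2) := by
      rw [hρddef, ← Real.rpow_neg (by norm_num), ← Real.rpow_add (by norm_num)]
      ring_nf
    rw [hcomb]
    have := Real.rpow_lt_rpow_of_exponent_lt (by norm_num : (1:ℝ) < 2)
      (by linarith : (0:ℝ) < δ/2)
    simpa [Real.rpow_zero] using this
  -- domination
  have hdom : ∀ y x : ℝ, 0 < x → 2 * t1 ≤ y / x →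
      G (y / x) ≤ ρd * (1 + x ^ (p + δ/2)) * G y := by
    intro y x hx hxy
    exact brei_dom G hGanti hG0 (p + δ/2) t1 ht1 (by linarith) hstepu y x hx hxy
  -- facts about μ
  have hμae : ∀ᵐ x ∂μ, 0 < x := by
    have h : ∀ᵐ x ∂(Measure.map X ℙ), x ∈ Ioi (0:ℝ) :=
      (MeasureTheory.ae_map_iff hXmeas.aemeasurable measurableSet_Ioi).2
        (ae_of_all _ fun ω => mem_Ioi.2 (hXpos ω))
    rw [hμdef]
    filter_upwards [h] with x hx using mem_Ioi.1 hx
  have hrpow_meas : ∀ q : ℝ, 0 ≤ q → Measurable fun x : ℝ => x ^ q :=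
    fun q hq => (Real.continuous_rpow_const hq).measurable
  have hint_pδ : Integrable (fun x => x ^ (p + δ)) μ := by
    rw [hμdef, integrable_map_measure
      (hrpow_meas _ (by linarith)).aestronglyMeasurable hXmeas.aemeasurable]
    exact hmom
  have hint_exp : ∀ q, 0 ≤ q → q ≤ p + δ → Integrable (fun x : ℝ => x ^ q) μ := by
    intro q hq hqle
    have hbd : Integrable (fun x : ℝ => 1 + x ^ (p + δ)) μ := (integrable_const 1).add hint_pδ
    apply hbd.mono' (hrpow_meas q hq).aestronglyMeasurable
    filter_upwards [hμae] with x hx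
    rw [Real.norm_eq_abs, abs_of_nonneg (Real.rpow_pos_of_pos hx q).le]
    rcases le_or_gt x 1 with h1 | h1
    · have h2 : x ^ q ≤ 1 := Real.rpow_le_one hx.le h1 hq
      have h3 : 0 ≤ x ^ (p + δ) := (Real.rpow_pos_of_pos hx _).le
      linarith
    · have h2 : x ^ q ≤ x ^ (p + δ) := Real.rpow_le_rpow_of_exponent_le h1.le hqle
      linarith
  have hEq_int : ∫ x, x ^ p ∂μ = ∫ ω, X ω ^ p ∂ℙ := by
    rw [hμdef, integral_map hXmeas.aemeasurable (hrpow_meas p hp.le).aestronglyMeasurable]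
  -- key disintegration identity
  have hKEY : ∀ y : ℝ, (ℙ {ω | y < X ω * Y ω}).toReal = ∫ x, G (y / x) ∂μ := by
    intro y
    have hmap : Measure.map (fun ω => (X ω, Y ω)) ℙ = μ.prod ν :=
      (indepFun_iff_map_prod_eq_prod_map_map hXmeas.aemeasurable hYmeas.aemeasurable).1 hindep
    have hset : MeasurableSet {q : ℝ × ℝ | y < q.1 * q.2} :=
      measurableSet_lt measurable_const (measurable_fst.mul measurable_snd)
    have h1 : ℙ {ω | y < X ω * Y ω} = (μ.prod ν) {q : ℝ × ℝ | y < q.1 * q.2} := by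
      rw [← hmap, Measure.map_apply (hXmeas.prodMk hYmeas) hset]
      rfl
    rw [h1, Measure.prod_apply hset]
    have h2 : ∀ᵐ x ∂μ, ν (Prod.mk x ⁻¹' {q : ℝ × ℝ | y < q.1 * q.2})
        = ENNReal.ofReal (G (y / x)) := by
      filter_upwards [hμae] with x hx
      have hpre : Prod.mk x ⁻¹' {q : ℝ × ℝ | y < q.1 * q.2} = Ioi (y / x) := by
        ext b
        simp only [mem_preimage, mem_setOf_eq, mem_Ioi]
        rw [div_lt_iff₀ hx]
        constructor <;> intro h <;> nlinarith
      rw [hpre]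
      exact (ENNReal.ofReal_toReal (measure_ne_top ν _)).symm
    rw [lintegral_congr_ae h2,
      integral_eq_lintegral_of_nonneg_ae (ae_of_all _ fun x => hG0 (y / x))
        ((hGmeas.comp (measurable_const.div measurable_id)).aestronglyMeasurable)]
  -- inner function
  set inner : ℝ → ℝ → ℝ := fun y x => G (y / x) / G y with hinnerdef
  have hinner_meas : ∀ y, Measurable (inner y) :=
    fun y => (hGmeas.comp (measurable_const.div measurable_id)).div_const _
  have hinner_nonneg : ∀ y x, 0 ≤ inner y x := fun y x => div_nonneg (hG0 _) (hG0 _)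
  have hinner_le : ∀ y x, inner y x ≤ (G y)⁻¹ := by
    intro y x
    show G (y / x) / G y ≤ (G y)⁻¹
    rw [div_le_iff₀ (hGpos y), inv_mul_cancel₀ (hGpos y).ne']
    exact hG1 _
  have hinner_int : ∀ y, Integrable (inner y) μ := by
    intro y
    apply (integrable_const ((G y)⁻¹)).mono' (hinner_meas y).aestronglyMeasurable
    apply ae_of_all
    intro x
    rw [Real.norm_eq_abs, abs_of_nonneg (hinner_nonneg y x)]
    exact hinner_le y x
  set A : ℝ → ℝ := fun y => ∫ x, (Iic (y / (2 * t1))).indicator (inner y) x ∂μ with hAdef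
  set B : ℝ → ℝ := fun y => ∫ x, (Ioi (y / (2 * t1))).indicator (inner y) x ∂μ with hBdef
  have hsplit : ∀ y, ∫ x, inner y x ∂μ = A y + B y := by
    intro y
    rw [hAdef, hBdef, ← integral_add ((hinner_int y).indicator measurableSet_Iic)
      ((hinner_int y).indicator measurableSet_Ioi)]
    apply integral_congr_ae
    apply ae_of_all
    intro x
    have hc : Ioi (y / (2 * t1)) = (Iic (y / (2 * t1)))ᶜ := compl_Iic.symm
    rw [hc]
    exact (Set.indicator_self_add_compl_apply _ _ _).symm
  set bnd : ℝ → ℝ := fun x => ρd * (1 + x ^ (p + δ/2)) with hbnddef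
  have hint_bnd : Integrable bnd μ :=
    (((integrable_const 1).add (hint_exp (p + δ/2) (by linarith) (by linarith))).const_mul ρd)
  have hA : Tendsto A atTop (𝓝 (∫ x, x ^ p ∂μ)) := by
    apply tendsto_integral_filter_of_dominated_convergence bnd
    · exact Eventually.of_forall fun y =>
        ((hinner_meas y).indicator measurableSet_Iic).aestronglyMeasurable
    · filter_upwards [eventually_gt_atTop (0:ℝ)] with y hy
      filter_upwards [hμae] with x hx
      have hbnd0 : 0 ≤ bnd x := by
        have := (Real.rpow_pos_of_pos hx (p + δ/2)).le
        rw [hbnddef]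
        positivity
      by_cases hmem : x ∈ Iic (y / (2 * t1))
      · rw [Real.norm_eq_abs, indicator_of_mem hmem,
          abs_of_nonneg (hinner_nonneg y x)]
        have h2t1 : 2 * t1 ≤ y / x := by
          rw [le_div_iff₀ hx]
          have h3 := (le_div_iff₀ (by positivity : (0:ℝ) < 2 * t1)).1 hmem
          nlinarith
        have h4 := hdom y x hx h2t1
        show G (y / x) / G y ≤ bnd x
        rw [div_le_iff₀ (hGpos y)]
        exact h4.trans_eq (by rw [hbnddef])
      · rw [indicator_of_notMem hmem, norm_zero]
        exact hbnd0
    · exact hint_bnd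
    · filter_upwards [hμae] with x hx
      have hlim := hratio x⁻¹ (inv_pos.2 hx)
      have hxp : (x⁻¹ : ℝ) ^ (-p) = x ^ p := by
        rw [Real.inv_rpow hx.le, Real.rpow_neg hx.le, inv_inv]
      rw [hxp] at hlim
      apply hlim.congr'
      filter_upwards [eventually_ge_atTop (2 * t1 * x)] with y hy
      have hmem : x ∈ Iic (y / (2 * t1)) := by
        rw [mem_Iic, le_div_iff₀ (by positivity : (0:ℝ) < 2 * t1)]
        nlinarith
      rw [indicator_of_mem hmem]
      show G (x⁻¹ * y) / G y = G (y / x) / G y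
      have hxy : y / x = x⁻¹ * y := by ring
      rw [hxy]
  have hB : Tendsto B atTop (𝓝 0) := by
    set Mδ : ℝ := ∫ x, x ^ (p + δ) ∂μ with hMδdef
    have hub : ∀ᶠ y in atTop,
        B y ≤ (Mδ * (2 * t1) ^ (p + δ)) * (y ^ (p + δ) * G y)⁻¹ := by
      filter_upwards [eventually_ge_atTop (2 * t1)] with y hy
      set a : ℝ := y / (2 * t1) with hadef
      have h2t1 : (0:ℝ) < 2 * t1 := by linarith
      have ha1 : 1 ≤ a := (one_le_div h2t1).2 hy
      have hapos : 0 < a := lt_of_lt_of_le one_pos ha1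
      have hypos : 0 < y := by
        have := (div_pos_iff.1 (lt_of_lt_of_le one_pos ha1))
        rcases this with ⟨h, _⟩ | ⟨_, h⟩
        · exact h
        · linarith
      have hstep1 : B y ≤ (μ (Ioi a)).toReal * (G y)⁻¹ := by
        have hmono : ∀ x, (Ioi a).indicator (inner y) x
            ≤ (Ioi a).indicator (fun _ => (G y)⁻¹) x := by
          intro x
          exact Set.indicator_le_indicator (hinner_le y x)
        calc B y ≤ ∫ x, (Ioi a).indicator (fun _ => (G y)⁻¹) x ∂μ :=
              integral_mono ((hinner_int y).indicator measurableSet_Ioi)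
                ((integrable_const _).indicator measurableSet_Ioi) hmono
          _ = (μ (Ioi a)).toReal * (G y)⁻¹ := by
              rw [integral_indicator_const _ measurableSet_Ioi, smul_eq_mul, measureReal_def]
      have hmark : a ^ (p + δ) * (μ (Ioi a)).toReal ≤ Mδ := by
        have hsub : Ioi a ⊆ {x : ℝ | a ^ (p + δ) ≤ x ^ (p + δ)} := fun x hx =>
          Real.rpow_le_rpow hapos.le (le_of_lt hx) (by linarith)
        have hμle : (μ (Ioi a)).toReal ≤ (μ {x : ℝ | a ^ (p + δ) ≤ x ^ (p + δ)}).toReal :=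
          ENNReal.toReal_mono (measure_ne_top _ _) (measure_mono hsub)
        have hmk := mul_meas_ge_le_integral_of_nonneg (μ := μ)
          (f := fun x : ℝ => x ^ (p + δ))
          (by filter_upwards [hμae] with x hx; exact (Real.rpow_pos_of_pos hx _).le)
          (hint_exp (p + δ) (by linarith) le_rfl) (a ^ (p + δ))
        have hap : 0 < a ^ (p + δ) := Real.rpow_pos_of_pos hapos _
        rw [measureReal_def] at hmk
        nlinarith
      have hap : 0 < a ^ (p + δ) := Real.rpow_pos_of_pos hapos _
      have hGy := hGpos y
      have hμa : (μ (Ioi a)).toReal ≤ Mδ / a ^ (p + δ) := by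
        rw [le_div_iff₀ hap]
        nlinarith
      have hfinal : B y ≤ Mδ / a ^ (p + δ) * (G y)⁻¹ := by
        apply le_trans hstep1
        apply mul_le_mul_of_nonneg_right hμa (inv_nonneg.2 hGy.le)
      apply le_trans hfinal
      apply le_of_eq
      have haexp : a ^ (p + δ) = y ^ (p + δ) / (2 * t1) ^ (p + δ) :=
        Real.div_rpow hypos.le h2t1.le (p + δ)
      have hyp : (0:ℝ) < y ^ (p + δ) := Real.rpow_pos_of_pos hypos _
      have h2t1p : (0:ℝ) < (2 * t1) ^ (p + δ) := Real.rpow_pos_of_pos h2t1 _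
      rw [haexp]
      field_simp
    have hlim0 : Tendsto (fun y : ℝ => (Mδ * (2 * t1) ^ (p + δ)) * (y ^ (p + δ) * G y)⁻¹)
        atTop (𝓝 0) := by
      have h := hflim.inv_tendsto_atTop
      have := h.const_mul (Mδ * (2 * t1) ^ (p + δ))
      simpa using this
    have hB0 : ∀ᶠ y in atTop, 0 ≤ B y := Eventually.of_forall fun y =>
      integral_nonneg fun x => indicator_nonneg (fun z _ => hinner_nonneg y z) x
    exact squeeze_zero' hB0 hub hlim0
  -- final assembly
  have hfin : Tendsto (fun y => (A y + B y) * (G y / (y ^ (-p) * L y))) atTop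
      (𝓝 (∫ x, x ^ p ∂μ)) := by
    have := (hA.add hB).mul htail'
    simpa using this
  rw [← hEq_int]
  apply hfin.congr'
  filter_upwards [eventually_gt_atTop (0:ℝ)] with y hy
  have h1 : ∫ x, G (y / x) ∂μ = (∫ x, inner y x ∂μ) * G y := by
    have h2 : ∫ x, inner y x ∂μ = (∫ x, G (y / x) ∂μ) / G y := integral_div (G y) _
    rw [h2, div_mul_cancel₀ _ (hGpos y).ne']
  rw [hKEY y, h1, hsplit y, mul_div_assoc]
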